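/- Guided reverse factorization (exact discrete core of Theorem 1): in the discrete diffusion-with-label model, for every i with 1 ≤ i ≤ T, every a, b ∈ S, h ∈ H, c ∈ C such that the marginals P(x i = b, c, h) > 0, P(x (i−1) = a, x i = b, h) > 0, P(x (i−1) = a, h) > 0 and the conditional P(c ∣ x i = b, h) > 0, the label-guided reverse conditional factorizes as P(x (i−1) = a ∣ x i = b, c, h) = P(x (i−1) = a ∣ x i = b, h) · P(c ∣ x (i−1) = a, h) / P(c ∣ x i = b, h). -/

import Mathlib

open Finset

/-- Joint probability mass function of the discrete diffusion-with-label model. -/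
noncomputable def P {H S C : Type*} [Fintype S] (T : ℕ)
    (pi : H → ℝ) (rho : H → S → ℝ) (lab : H → S → C → ℝ) (kappa : S → S → ℝ)
    (h : H) (x : Fin (T + 1) → S) (c : C) : ℝ :=
  pi h * rho h (x 0) * lab h (x 0) c * ∏ i : Fin T, kappa (x i.castSucc) (x i.succ)

section Aux

variable {H S C : Type*} [Fintype S] [DecidableEq S]
  (pi : H → ℝ) (rho : H → S → ℝ) (lab : H → S → C → ℝ) (kappa : S → S → ℝ) (h : H) (c : C)

omit [DecidableEq S] in
lemma Pnonneg (hpi : ∀ h, 0 ≤ pi h) (hrho : ∀ h s, 0 ≤ rho h s)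
    (hlab : ∀ h s c, 0 ≤ lab h s c) (hk : ∀ a b, 0 ≤ kappa a b)
    (T : ℕ) (x : Fin (T+1) → S) :
    0 ≤ P T pi rho lab kappa h x c :=
  mul_nonneg (mul_nonneg (mul_nonneg (hpi h) (hrho h _)) (hlab h _ c))
    (Finset.prod_nonneg fun _ _ => hk _ _)

omit [DecidableEq S] in
lemma Psnoc (n : ℕ) (y : Fin (n+1) → S) (s : S) :
    P (n+1) pi rho lab kappa h (Fin.snoc y s) c
      = P n pi rho lab kappa h y c * kappa (y (Fin.last n)) s := by
  unfold P
  rw [Fin.prod_univ_castSucc]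
  simp only [Fin.succ_castSucc, Fin.snoc_castSucc, Fin.succ_last, Fin.snoc_last,
    ← Fin.castSucc_zero, Fin.snoc_castSucc]
  ring

lemma step (n : ℕ) (p : (Fin (n+1) → S) → Prop) [DecidablePred p] (w : S → ℝ) :
    ∑ x : Fin (n+2) → S,
        (if p (Fin.init x) then P (n+1) pi rho lab kappa h x c * w (x (Fin.last (n+1))) else 0)
      = ∑ y : Fin (n+1) → S,
        (if p y then P n pi rho lab kappa h y c * (∑ s, kappa (y (Fin.last n)) s * w s) else 0) := by
  rw [← Equiv.sum_comp (Fin.snocEquiv (fun _ : Fin (n+2) => S))]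
  rw [Fintype.sum_prod_type]
  rw [Finset.sum_comm]
  refine Finset.sum_congr rfl fun y _ => ?_
  have he : ∀ s : S, ((Fin.snocEquiv fun _ : Fin (n+2) => S) (s, y)) = Fin.snoc y s :=
    fun s => rfl
  by_cases hp : p y
  · simp only [he, Fin.init_snoc, Fin.snoc_last, hp, if_true,
      Psnoc pi rho lab kappa h c n y]
    rw [Finset.mul_sum]
    refine Finset.sum_congr rfl fun s _ => ?_
    ring
  · simp [he, Fin.init_snoc, hp]

lemma key2 (hks : ∀ a, ∑ b, kappa a b = 1) (a : S) (j : ℕ) : ∀ m : ℕ,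
    ∑ x : Fin (j + 1 + m + 1) → S,
        (if x ⟨j, by omega⟩ = a then P (j + 1 + m) pi rho lab kappa h x c else 0)
      = ∑ y : Fin (j + 1) → S,
        (if y (Fin.last j) = a then P j pi rho lab kappa h y c else 0) := by
  intro m
  induction m with
  | zero =>
      have hstep := step pi rho lab kappa h c j (fun y => y (Fin.last j) = a) (fun _ => (1:ℝ))
      simp only [mul_one, hks] at hstep
      exact hstep
  | succ m ih =>
      have hstep := step pi rho lab kappa h c (j + 1 + m)
        (fun y => y ⟨j, by omega⟩ = a) (fun _ => (1:ℝ))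
      simp only [mul_one, hks] at hstep
      rw [ih] at hstep
      exact hstep

lemma key1 (hks : ∀ a, ∑ b, kappa a b = 1) (a b : S) (j : ℕ) : ∀ m : ℕ,
    ∑ x : Fin (j + 1 + m + 1) → S,
        (if x ⟨j, by omega⟩ = a ∧ x ⟨j + 1, by omega⟩ = b
          then P (j + 1 + m) pi rho lab kappa h x c else 0)
      = kappa a b * ∑ y : Fin (j + 1) → S,
        (if y (Fin.last j) = a then P j pi rho lab kappa h y c else 0) := by
  intro m
  induction m with
  | zero =>
      have hstep := step pi rho lab kappa h c j (fun y => y (Fin.last j) = a)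
        (fun s => if s = b then (1:ℝ) else 0)
      have hL : (∑ x : Fin (j + 1 + 0 + 1) → S,
          (if x ⟨j, by omega⟩ = a ∧ x ⟨j + 1, by omega⟩ = b
            then P (j + 1 + 0) pi rho lab kappa h x c else 0))
          = ∑ x : Fin (j+2) → S,
            (if Fin.init x (Fin.last j) = a
              then P (j+1) pi rho lab kappa h x c
                * (if x (Fin.last (j+1)) = b then (1:ℝ) else 0) else 0) := by
        refine Finset.sum_congr rfl fun x _ => ?_
        have e1 : Fin.init x (Fin.last j) = x ⟨j, by omega⟩ := rfl
        have e2 : x (Fin.last (j+1)) = x ⟨j + 1, by omega⟩ := rfl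
        rw [e1, e2]
        by_cases hA : x ⟨j, by omega⟩ = a <;> by_cases hB : x ⟨j+1, by omega⟩ = b <;>
          simp [hA, hB]
      rw [hL, hstep, Finset.mul_sum]
      refine Finset.sum_congr rfl fun y _ => ?_
      by_cases hA : y (Fin.last j) = a
      · simp only [hA, if_true, mul_ite, mul_one, mul_zero, Finset.sum_ite_eq',
          Finset.mem_univ, if_true]
        ring
      · simp [hA]
  | succ m ih =>
      have hstep := step pi rho lab kappa h c (j + 1 + m)
        (fun y => y ⟨j, by omega⟩ = a ∧ y ⟨j + 1, by omega⟩ = b) (fun _ => (1:ℝ))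
      simp only [mul_one, hks] at hstep
      rw [ih] at hstep
      exact hstep

end Aux

/-- Guided reverse factorization (exact discrete core of Theorem 1):
`P(x (i−1) = a ∣ x i = b, c, h)
  = P(x (i−1) = a ∣ x i = b, h) · P(c ∣ x (i−1) = a, h) / P(c ∣ x i = b, h)`. -/
theorem guided_reverse_factorization {H S C : Type*} [Fintype H] [Fintype S] [Fintype C]
    [Nonempty H] [Nonempty S] [Nonempty C] [DecidableEq S]
    (T : ℕ) (hT : 1 ≤ T)
    (pi : H → ℝ) (rho : H → S → ℝ) (lab : H → S → C → ℝ) (kappa : S → S → ℝ)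
    (hpi : ∀ h, 0 ≤ pi h) (hpis : ∑ h, pi h = 1)
    (hrho : ∀ h s, 0 ≤ rho h s) (hrhos : ∀ h, ∑ s, rho h s = 1)
    (hlab : ∀ h s c, 0 ≤ lab h s c) (hlabs : ∀ h s, ∑ c, lab h s c = 1)
    (hk : ∀ a b, 0 ≤ kappa a b) (hks : ∀ a, ∑ b, kappa a b = 1)
    (i : ℕ) (hi1 : 1 ≤ i) (hi2 : i ≤ T) (a b : S) (h : H) (c : C)
    -- P(x i = b, c, h) > 0
    (hpos1 : 0 < ∑ x ∈ univ.filter (fun x : Fin (T + 1) → S => x ⟨i, by omega⟩ = b),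
        P T pi rho lab kappa h x c)
    -- P(x (i−1) = a, x i = b, h) > 0
    (hpos2 : 0 < ∑ c' : C, ∑ x ∈ univ.filter (fun x : Fin (T + 1) → S =>
        x ⟨i - 1, by omega⟩ = a ∧ x ⟨i, by omega⟩ = b), P T pi rho lab kappa h x c')
    -- P(x (i−1) = a, h) > 0
    (hpos3 : 0 < ∑ c' : C, ∑ x ∈ univ.filter (fun x : Fin (T + 1) → S =>
        x ⟨i - 1, by omega⟩ = a), P T pi rho lab kappa h x c')
    -- P(c ∣ x i = b, h) > 0
    (hpos4 : 0 <
      (∑ x ∈ univ.filter (fun x : Fin (T + 1) → S => x ⟨i, by omega⟩ = b),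
          P T pi rho lab kappa h x c) /
        (∑ c' : C, ∑ x ∈ univ.filter (fun x : Fin (T + 1) → S => x ⟨i, by omega⟩ = b),
          P T pi rho lab kappa h x c')) :
    -- P(x (i−1) = a ∣ x i = b, c, h)
    (∑ x ∈ univ.filter (fun x : Fin (T + 1) → S =>
        x ⟨i - 1, by omega⟩ = a ∧ x ⟨i, by omega⟩ = b), P T pi rho lab kappa h x c) /
      (∑ x ∈ univ.filter (fun x : Fin (T + 1) → S => x ⟨i, by omega⟩ = b),
        P T pi rho lab kappa h x c) =
    -- P(x (i−1) = a ∣ x i = b, h)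
    ((∑ c' : C, ∑ x ∈ univ.filter (fun x : Fin (T + 1) → S =>
        x ⟨i - 1, by omega⟩ = a ∧ x ⟨i, by omega⟩ = b), P T pi rho lab kappa h x c') /
      (∑ c' : C, ∑ x ∈ univ.filter (fun x : Fin (T + 1) → S => x ⟨i, by omega⟩ = b),
        P T pi rho lab kappa h x c')) *
    -- P(c ∣ x (i−1) = a, h)
    ((∑ x ∈ univ.filter (fun x : Fin (T + 1) → S => x ⟨i - 1, by omega⟩ = a),
        P T pi rho lab kappa h x c) /
      (∑ c' : C, ∑ x ∈ univ.filter (fun x : Fin (T + 1) → S => x ⟨i - 1, by omega⟩ = a),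
        P T pi rho lab kappa h x c')) /
    -- P(c ∣ x i = b, h)
    ((∑ x ∈ univ.filter (fun x : Fin (T + 1) → S => x ⟨i, by omega⟩ = b),
        P T pi rho lab kappa h x c) /
      (∑ c' : C, ∑ x ∈ univ.filter (fun x : Fin (T + 1) → S => x ⟨i, by omega⟩ = b),
        P T pi rho lab kappa h x c')) := by
  obtain ⟨j, rfl⟩ : ∃ j, i = j + 1 := ⟨i - 1, by omega⟩
  obtain ⟨m, rfl⟩ : ∃ m, T = j + 1 + m := ⟨T - (j + 1), by omega⟩
  -- abbreviations
  set M : C → ℝ := fun c' => ∑ y : Fin (j + 1) → S,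
    (if y (Fin.last j) = a then P j pi rho lab kappa h y c' else 0) with hM
  have f1 : ∀ c' : C,
      (∑ x ∈ univ.filter (fun x : Fin (j + 1 + m + 1) → S =>
        x ⟨j + 1 - 1, by omega⟩ = a ∧ x ⟨j + 1, by omega⟩ = b), P (j + 1 + m) pi rho lab kappa h x c')
      = kappa a b * M c' := by
    intro c'
    rw [Finset.sum_filter]
    exact key1 pi rho lab kappa h c' hks a b j m
  have f2 : ∀ c' : C,
      (∑ x ∈ univ.filter (fun x : Fin (j + 1 + m + 1) → S =>
        x ⟨j + 1 - 1, by omega⟩ = a), P (j + 1 + m) pi rho lab kappa h x c')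
      = M c' := by
    intro c'
    rw [Finset.sum_filter]
    exact key2 pi rho lab kappa h c' hks a j m
  set D1 : C → ℝ := fun c' => ∑ x ∈ univ.filter
    (fun x : Fin (j + 1 + m + 1) → S => x ⟨j + 1, by omega⟩ = b),
    P (j + 1 + m) pi rho lab kappa h x c' with hD1
  have hD1nonneg : ∀ c', 0 ≤ D1 c' := fun c' =>
    Finset.sum_nonneg fun x _ => Pnonneg pi rho lab kappa h c' hpi hrho hlab hk _ x
  have hD1pos : 0 < D1 c := hpos1
  have hD2pos : 0 < ∑ c' : C, D1 c' :=
    lt_of_lt_of_le hD1pos (Finset.single_le_sum (fun c' _ => hD1nonneg c') (Finset.mem_univ c))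
  have hS3pos : 0 < ∑ c' : C, M c' := by
    have := hpos3
    simp only [f2] at this
    exact this
  rw [f1 c, f2 c]
  simp only [f1, f2]
  rw [← Finset.mul_sum]
  have h1 : D1 c ≠ 0 := ne_of_gt hD1pos
  have h2 : (∑ c' : C, D1 c') ≠ 0 := ne_of_gt hD2pos
  have h3 : (∑ c' : C, M c') ≠ 0 := ne_of_gt hS3pos
  field_simp
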